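/- Fix d > 1 and 0 < λ < ∞, and let f_λ denote the unique fixed point of the truncated cavity operator T, extended to ℝ by 1 on (-∞,-λ] and 0 on (λ,∞). Then for all x ≥ 0, 1 - f_λ(-x) ≤ exp(-x^d / e). -/

import Mathlib

open MeasureTheory Set

/-- The truncated cavity operator `T`. -/
noncomputable def T (d lam : ℝ) (f : ℝ → ℝ) : ℝ → ℝ :=
  fun x => Real.exp (-(d * ∫ y in (-x)..lam, (x + y) ^ (d - 1) * f y))

/-- `f` is the fixed point of the truncated cavity operator on `[-λ, λ]`
(non-increasing and `[0,1]`-valued there), extended to `ℝ` by `1` on `(-∞, -λ]`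
and `0` on `(λ, ∞)`. -/
def ExtFixedPoint (d lam : ℝ) (f : ℝ → ℝ) : Prop :=
  AntitoneOn f (Icc (-lam) lam) ∧
  (∀ x ∈ Icc (-lam) lam, f x ∈ Icc (0 : ℝ) 1) ∧
  (∀ x ≤ -lam, f x = 1) ∧ (∀ x > lam, f x = 0) ∧
  (∀ x ∈ Icc (-lam) lam, T d lam f x = f x)

/-- Superadditivity of `t ↦ t ^ d` for `d ≥ 1` on nonnegative reals. -/
private lemma rpow_superadd {d x y : ℝ} (hd : 1 ≤ d) (hx : 0 ≤ x) (hy : 0 ≤ y) :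
    x ^ d + y ^ d ≤ (x + y) ^ d := by
  have hdne : d ≠ 0 := by intro h; rw [h] at hd; norm_num at hd
  rcases eq_or_lt_of_le (add_nonneg hx hy) with h | h
  · have hx0 : x = 0 := by linarith
    have hy0 : y = 0 := by linarith
    rw [hx0, hy0]
    simp [Real.zero_rpow hdne]
  · have hd1 : (0:ℝ) ≤ d - 1 := by linarith
    have hxb : x ^ d ≤ x * (x + y) ^ (d - 1) := by
      rcases eq_or_lt_of_le hx with h0 | h0
      · rw [← h0, Real.zero_rpow hdne, zero_mul]
      · have e1 : x ^ d = x * x ^ (d - 1) := by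
          rw [show d = 1 + (d - 1) by ring, Real.rpow_add h0, Real.rpow_one]
          ring_nf
        rw [e1]
        exact mul_le_mul_of_nonneg_left
          (Real.rpow_le_rpow hx (by linarith) hd1) hx
    have hyb : y ^ d ≤ y * (x + y) ^ (d - 1) := by
      rcases eq_or_lt_of_le hy with h0 | h0
      · rw [← h0, Real.zero_rpow hdne, zero_mul]
      · have e1 : y ^ d = y * y ^ (d - 1) := by
          rw [show d = 1 + (d - 1) by ring, Real.rpow_add h0, Real.rpow_one]
          ring_nf
        rw [e1]
        exact mul_le_mul_of_nonneg_left
          (Real.rpow_le_rpow hy (by linarith) hd1) hy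
    have e2 : (x + y) ^ d = (x + y) * (x + y) ^ (d - 1) := by
      rw [show d = 1 + (d - 1) by ring, Real.rpow_add h, Real.rpow_one]
      ring_nf
    rw [e2]
    nlinarith

/-- Continuity of the comparison integrand. -/
private lemma cont_kernel_exp (d A c : ℝ) (hd : 1 ≤ d) :
    Continuous fun y : ℝ => A * (d * (y - c) ^ (d - 1) * Real.exp (-(A * (y - c) ^ d))) := by
  have hk : Continuous fun y : ℝ => (y - c) ^ (d - 1) :=
    (continuous_id.sub continuous_const).rpow_const fun x => Or.inr (by linarith)
  have hk2 : Continuous fun y : ℝ => (y - c) ^ d :=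
    (continuous_id.sub continuous_const).rpow_const fun x => Or.inr (by linarith)
  exact continuous_const.mul
    ((continuous_const.mul hk).mul (((continuous_const.mul hk2 : Continuous fun y : ℝ => A * (y - c) ^ d).neg).rexp))

/-- Exact value of the comparison integral. -/
private lemma integral_exp_kernel {d A c b : ℝ} (hd : 1 < d) (hcb : c ≤ b) :
    (∫ y in c..b, A * (d * (y - c) ^ (d - 1) * Real.exp (-(A * (y - c) ^ d))))
      = 1 - Real.exp (-(A * (b - c) ^ d)) := by
  have hdne : d ≠ 0 := by linarith
  have hder : ∀ y ∈ Set.uIcc c b, HasDerivAt (fun t => -Real.exp (-(A * (t - c) ^ d)))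
      (A * (d * (y - c) ^ (d - 1) * Real.exp (-(A * (y - c) ^ d)))) y := by
    intro y _
    have h1 : HasDerivAt (fun t : ℝ => t - c) 1 y := (hasDerivAt_id y).sub_const c
    have h2 : HasDerivAt (fun u : ℝ => u ^ d) (d * (y - c) ^ (d - 1)) (y - c) :=
      Real.hasDerivAt_rpow_const (Or.inr hd.le)
    have h3 : HasDerivAt (fun t : ℝ => (t - c) ^ d) (d * (y - c) ^ (d - 1) * 1) y :=
      by have := h2.comp y h1; exact this
    have h4 := ((h3.const_mul A).neg).exp.neg
    refine h4.congr_deriv ?_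
    simp only [Pi.neg_apply]
    ring
  have hcont : IntervalIntegrable (fun y => A * (d * (y - c) ^ (d - 1) * Real.exp (-(A * (y - c) ^ d)))) volume c b :=
    (cont_kernel_exp d A c hd.le).intervalIntegrable c b
  rw [intervalIntegral.integral_eq_sub_of_hasDerivAt hder hcont]
  rw [sub_self, Real.zero_rpow hdne]
  simp
  ring

theorem fixedPoint_uniform_lower (d lam : ℝ) (hd : 1 < d) (hlam : 0 < lam)
    (flam : ℝ → ℝ) (hflam : ExtFixedPoint d lam flam) :
    ∀ x : ℝ, 0 ≤ x → 1 - flam (-x) ≤ Real.exp (-(x ^ d / Real.exp 1)) := by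
  obtain ⟨hmono, hmem, hone, hzero, hfix⟩ := hflam
  have hd0 : (0:ℝ) < d := by linarith
  have hd1 : (0:ℝ) ≤ d - 1 := by linarith
  have hdne : d ≠ 0 := ne_of_gt hd0
  have h0mem : (0:ℝ) ∈ Icc (-lam) lam := ⟨by linarith, hlam.le⟩
  -- global bounds on flam
  have hf01 : ∀ y : ℝ, 0 ≤ flam y ∧ flam y ≤ 1 := by
    intro y
    rcases le_or_gt y (-lam) with h | h
    · rw [hone y h]; exact ⟨zero_le_one, le_refl 1⟩
    · rcases le_or_gt y lam with h2 | h2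
      · have := hmem y ⟨h.le, h2⟩; exact ⟨this.1, this.2⟩
      · rw [hzero y h2]; exact ⟨le_refl 0, zero_le_one⟩
  -- integrability facts
  have hfint : ∀ p q : ℝ, -lam ≤ p → p ≤ q → q ≤ lam →
      IntervalIntegrable flam volume p q := by
    intro p q hp hpq hq
    exact (hmono.mono (uIcc_subset_Icc ⟨hp, by linarith⟩ ⟨by linarith, hq⟩)).intervalIntegrable
  have hkc : ∀ c : ℝ, Continuous fun y : ℝ => (c + y) ^ (d - 1) := by
    intro c
    exact (continuous_const.add continuous_id).rpow_const fun x => Or.inr hd1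
  have hKint : ∀ c p q : ℝ, -lam ≤ p → p ≤ q → q ≤ lam →
      IntervalIntegrable (fun y => (c + y) ^ (d - 1) * flam y) volume p q := by
    intro c p q hp hpq hq
    exact (hfint p q hp hpq hq).continuousOn_mul (hkc c).continuousOn
  -- the value at 0
  set K : ℝ := ∫ t in (0:ℝ)..lam, ((0:ℝ) + t) ^ (d - 1) * flam t with hKdef
  have hf0 : flam 0 = Real.exp (-(d * K)) := by
    have h := hfix 0 h0mem
    simp only [T, neg_zero] at h
    exact h.symm
  set a : ℝ := Real.exp (-(d * K)) with ha
  have ha0 : 0 < a := Real.exp_pos _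
  -- Step A : pointwise exponential upper bound for flam on [0, lam]
  have hA : ∀ y ∈ Icc (0:ℝ) lam, flam y ≤ a * Real.exp (-(a * y ^ d)) := by
    intro y hy
    have hy0 : (0:ℝ) ≤ y := hy.1
    have hymem : y ∈ Icc (-lam) lam := ⟨by linarith, hy.2⟩
    have hfy : flam y = Real.exp (-(d * ∫ t in (-y)..lam, (y + t) ^ (d - 1) * flam t)) := by
      have h := hfix y hymem
      simp only [T] at h
      exact h.symm
    have hi1 : IntervalIntegrable (fun t => (y + t) ^ (d - 1) * flam t) volume (-y) 0 :=
      hKint y (-y) 0 (by linarith [hy.2]) (by linarith) hlam.le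
    have hi2 : IntervalIntegrable (fun t => (y + t) ^ (d - 1) * flam t) volume 0 lam :=
      hKint y 0 lam (by linarith) hlam.le le_rfl
    have hsplit : (∫ t in (-y)..0, (y + t) ^ (d - 1) * flam t)
        + (∫ t in (0:ℝ)..lam, (y + t) ^ (d - 1) * flam t)
        = ∫ t in (-y)..lam, (y + t) ^ (d - 1) * flam t :=
      intervalIntegral.integral_add_adjacent_intervals hi1 hi2
    -- lower bound for the piece on [-y, 0]
    have hlow1 : a * y ^ d / d ≤ ∫ t in (-y)..0, (y + t) ^ (d - 1) * flam t := by
      have hcint : IntervalIntegrable (fun t : ℝ => (y + t) ^ (d - 1) * a) volume (-y) 0 :=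
        ((hkc y).mul continuous_const).intervalIntegrable _ _
      have hmono1 : (∫ t in (-y)..0, (y + t) ^ (d - 1) * a)
          ≤ ∫ t in (-y)..0, (y + t) ^ (d - 1) * flam t := by
        apply intervalIntegral.integral_mono_on (by linarith) hcint hi1
        intro t ht
        have htmem : t ∈ Icc (-lam) lam := ⟨by linarith [ht.1, hy.2], by linarith [ht.2]⟩
        have hft : flam 0 ≤ flam t := hmono htmem h0mem ht.2
        have hker : 0 ≤ (y + t) ^ (d - 1) := Real.rpow_nonneg (by linarith [ht.1]) _
        calc (y + t) ^ (d - 1) * a = (y + t) ^ (d - 1) * flam 0 := by rw [hf0]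
          _ ≤ (y + t) ^ (d - 1) * flam t := mul_le_mul_of_nonneg_left hft hker
      have hcalc : (∫ t in (-y)..0, (y + t) ^ (d - 1) * a) = a * y ^ d / d := by
        rw [intervalIntegral.integral_mul_const]
        have e1 : (∫ t in (-y)..0, (y + t) ^ (d - 1))
            = ∫ u in (y + -y)..(y + 0), u ^ (d - 1) :=
          intervalIntegral.integral_comp_add_left (fun u => u ^ (d - 1)) y
        rw [e1, add_neg_cancel, add_zero,
          integral_rpow (Or.inl (by linarith : (-1:ℝ) < d - 1))]
        rw [show d - 1 + 1 = d by ring, Real.zero_rpow hdne]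
        ring
      linarith
    -- lower bound for the piece on [0, lam]
    have hlow2 : K ≤ ∫ t in (0:ℝ)..lam, (y + t) ^ (d - 1) * flam t := by
      rw [hKdef]
      apply intervalIntegral.integral_mono_on hlam.le
        (hKint 0 0 lam (by linarith) hlam.le le_rfl) hi2
      intro t ht
      exact mul_le_mul_of_nonneg_right
        (Real.rpow_le_rpow (by linarith [ht.1]) (by linarith [ht.1]) hd1) (hf01 t).1
    have hIlow : a * y ^ d / d + K ≤ ∫ t in (-y)..lam, (y + t) ^ (d - 1) * flam t := by
      rw [← hsplit]; linarith
    rw [hfy]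
    have h1 : a * y ^ d + d * K ≤ d * ∫ t in (-y)..lam, (y + t) ^ (d - 1) * flam t := by
      have h2 := mul_le_mul_of_nonneg_left hIlow hd0.le
      have e : d * (a * y ^ d / d + K) = a * y ^ d + d * K := by field_simp
      linarith [e ▸ h2]
    calc Real.exp (-(d * ∫ t in (-y)..lam, (y + t) ^ (d - 1) * flam t))
        ≤ Real.exp (-(a * y ^ d + d * K)) := Real.exp_le_exp.mpr (by linarith)
      _ = a * Real.exp (-(a * y ^ d)) := by
          rw [show -(a * y ^ d + d * K) = -(d * K) + -(a * y ^ d) by ring, Real.exp_add, ha]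
  -- Step B : d * K ≤ 1, hence a ≥ exp (-1)
  have hK1 : d * K ≤ 1 := by
    have hdK : d * K = ∫ t in (0:ℝ)..lam, d * (((0:ℝ) + t) ^ (d - 1) * flam t) := by
      rw [hKdef, intervalIntegral.integral_const_mul]
    have hmonoK : (∫ t in (0:ℝ)..lam, d * (((0:ℝ) + t) ^ (d - 1) * flam t))
        ≤ ∫ t in (0:ℝ)..lam, a * (d * (t - 0) ^ (d - 1) * Real.exp (-(a * (t - 0) ^ d))) := by
      apply intervalIntegral.integral_mono_on hlam.le
        ((hKint 0 0 lam (by linarith) hlam.le le_rfl).const_mul d)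
        ((cont_kernel_exp d a 0 hd.le).intervalIntegrable 0 lam)
      intro t ht
      have h1 : flam t ≤ a * Real.exp (-(a * t ^ d)) := hA t ht
      have hker : 0 ≤ ((0:ℝ) + t) ^ (d - 1) := Real.rpow_nonneg (by linarith [ht.1]) _
      have h2 : ((0:ℝ) + t) ^ (d - 1) * flam t
          ≤ ((0:ℝ) + t) ^ (d - 1) * (a * Real.exp (-(a * t ^ d))) :=
        mul_le_mul_of_nonneg_left h1 hker
      calc d * (((0:ℝ) + t) ^ (d - 1) * flam t)
          ≤ d * (((0:ℝ) + t) ^ (d - 1) * (a * Real.exp (-(a * t ^ d)))) :=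
            mul_le_mul_of_nonneg_left h2 hd0.le
        _ = a * (d * (t - 0) ^ (d - 1) * Real.exp (-(a * (t - 0) ^ d))) := by
            rw [zero_add, sub_zero]; ring
    have hcalc := integral_exp_kernel (d := d) (A := a) (c := 0) (b := lam) hd hlam.le
    rw [hcalc] at hmonoK
    have hpos : 0 < Real.exp (-(a * (lam - 0) ^ d)) := Real.exp_pos _
    linarith [hdK ▸ hmonoK]
  have hae : Real.exp (-1) ≤ a := Real.exp_le_exp.mpr (by linarith)
  -- Final step
  intro x hx
  rcases le_or_gt x lam with hxlam | hxlam
  · have hxmem : -x ∈ Icc (-lam) lam := ⟨by linarith, by linarith⟩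
    have hfx : flam (-x)
        = Real.exp (-(d * ∫ y in x..lam, (-x + y) ^ (d - 1) * flam y)) := by
      have h := hfix (-x) hxmem
      simp only [T, neg_neg] at h
      exact h.symm
    set J : ℝ := ∫ y in x..lam, (-x + y) ^ (d - 1) * flam y with hJdef
    have hJ0 : 0 ≤ J := by
      rw [hJdef]
      apply intervalIntegral.integral_nonneg hxlam
      intro y hy
      exact mul_nonneg (Real.rpow_nonneg (by linarith [hy.1]) _) (hf01 y).1
    have hJle : d * J ≤ Real.exp (-(x ^ d / Real.exp 1)) := by
      have hdJ : d * J = ∫ y in x..lam, d * ((-x + y) ^ (d - 1) * flam y) := by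
        rw [hJdef, intervalIntegral.integral_const_mul]
      have hmonoJ : (∫ y in x..lam, d * ((-x + y) ^ (d - 1) * flam y))
          ≤ ∫ y in x..lam, Real.exp (-(a * x ^ d))
              * (a * (d * (y - x) ^ (d - 1) * Real.exp (-(a * (y - x) ^ d)))) := by
        apply intervalIntegral.integral_mono_on hxlam
          ((hKint (-x) x lam (by linarith) hxlam le_rfl).const_mul d)
          ((continuous_const.mul (cont_kernel_exp d a x hd.le)).intervalIntegrable x lam)
        intro y hy
        have hy0 : (0:ℝ) ≤ y := le_trans hx hy.1
        have h1 : flam y ≤ a * Real.exp (-(a * y ^ d)) := hA y ⟨hy0, hy.2⟩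
        have hsup : x ^ d + (y - x) ^ d ≤ y ^ d := by
          have h := rpow_superadd hd.le hx (by linarith [hy.1] : (0:ℝ) ≤ y - x)
          rwa [show x + (y - x) = y by ring] at h
        have h2 : Real.exp (-(a * y ^ d))
            ≤ Real.exp (-(a * x ^ d)) * Real.exp (-(a * (y - x) ^ d)) := by
          rw [← Real.exp_add]
          apply Real.exp_le_exp.mpr
          nlinarith
        have hker_eq : (-x + y) ^ (d - 1) = (y - x) ^ (d - 1) := by
          rw [neg_add_eq_sub]
        have hker : 0 ≤ (y - x) ^ (d - 1) := Real.rpow_nonneg (by linarith [hy.1]) _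
        rw [hker_eq]
        calc d * ((y - x) ^ (d - 1) * flam y)
            ≤ d * ((y - x) ^ (d - 1)
                * (a * (Real.exp (-(a * x ^ d)) * Real.exp (-(a * (y - x) ^ d))))) := by
              apply mul_le_mul_of_nonneg_left _ hd0.le
              apply mul_le_mul_of_nonneg_left _ hker
              calc flam y ≤ a * Real.exp (-(a * y ^ d)) := h1
                _ ≤ a * (Real.exp (-(a * x ^ d)) * Real.exp (-(a * (y - x) ^ d))) :=
                    mul_le_mul_of_nonneg_left h2 ha0.le
          _ = Real.exp (-(a * x ^ d))
                * (a * (d * (y - x) ^ (d - 1) * Real.exp (-(a * (y - x) ^ d)))) := by ring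
      have hpull : (∫ y in x..lam, Real.exp (-(a * x ^ d))
              * (a * (d * (y - x) ^ (d - 1) * Real.exp (-(a * (y - x) ^ d)))))
          = Real.exp (-(a * x ^ d)) * (1 - Real.exp (-(a * (lam - x) ^ d))) := by
        rw [intervalIntegral.integral_const_mul, integral_exp_kernel hd hxlam]
      have hle1 : Real.exp (-(a * x ^ d)) * (1 - Real.exp (-(a * (lam - x) ^ d)))
          ≤ Real.exp (-(a * x ^ d)) := by
        nlinarith [Real.exp_pos (-(a * (lam - x) ^ d)), Real.exp_pos (-(a * x ^ d))]
      have hle2 : Real.exp (-(a * x ^ d)) ≤ Real.exp (-(x ^ d / Real.exp 1)) := by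
        apply Real.exp_le_exp.mpr
        have hxd : (0:ℝ) ≤ x ^ d := Real.rpow_nonneg hx d
        have e1 : x ^ d / Real.exp 1 = Real.exp (-1) * x ^ d := by
          rw [Real.exp_neg]; ring
        rw [e1]
        nlinarith [mul_le_mul_of_nonneg_right hae hxd]
      calc d * J = ∫ y in x..lam, d * ((-x + y) ^ (d - 1) * flam y) := hdJ
        _ ≤ ∫ y in x..lam, Real.exp (-(a * x ^ d))
              * (a * (d * (y - x) ^ (d - 1) * Real.exp (-(a * (y - x) ^ d)))) := hmonoJ
        _ = Real.exp (-(a * x ^ d)) * (1 - Real.exp (-(a * (lam - x) ^ d))) := hpull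
        _ ≤ Real.exp (-(a * x ^ d)) := hle1
        _ ≤ Real.exp (-(x ^ d / Real.exp 1)) := hle2
    rw [hfx]
    have honesub : 1 - Real.exp (-(d * J)) ≤ d * J := by
      have h := Real.add_one_le_exp (-(d * J))
      linarith
    linarith
  · rw [hone (-x) (by linarith)]
    simp only [sub_self]
    exact (Real.exp_pos _).le
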